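/- Let R₁, …, R_k be binary relations on a set I and let α₁, …, α_k be ordinals such that each R_i has height at most α_i. Then the converse of the one-step extension relation ≻ on H(R₁ ∪ … ∪ R_k) is well-founded, and the rank of the empty sequence with respect to ≻ (where rank(s) = sup{ rank(s') + 1 : s' ≻ s }) is at most 2^(α₁ ⊕ … ⊕ α_k), where ⊕ denotes the natural (Hessenberg) sum of ordinals and 2^γ is ordinal exponentiation. -/

import Mathlib

/-- `HSet r` is `H(r)`, the set of `r`-decreasing transitive finite sequences on `I`:
`⟨x₁, …, x_n⟩ ∈ H(r)` iff `i < j` implies `x_j r x_i`. -/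
def HSet {I : Type*} (r : I → I → Prop) : Set (List I) :=
  {l | l.Pairwise fun a b => r b a}

/-- One-step extension on `H(r)`: `s' ≻ s` iff `s' = s ++ [y]` for some `y`. -/
def HExt {I : Type*} (r : I → I → Prop) (s' s : {l : List I // l ∈ HSet r}) : Prop :=
  ∃ y : I, s'.1 = s.1 ++ [y]

/-- The rank of an element under a well-founded relation:
`rank x = sup { rank y + 1 : r y x }`. -/
noncomputable def WFRank {α : Type*} {r : α → α → Prop} (hwf : WellFounded r) (a : α) :
    Ordinal := (hwf.apply a).rank

universe v

/-! `NatOrdinal` (natural operations on ordinals) was removed from Mathlib; it is restored here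
with its old meaning: a copy of `Ordinal` whose addition is the natural (Hessenberg) sum `nadd`. -/

/-- Natural (Hessenberg) sum of ordinals, as in the old `Ordinal.nadd`. -/
noncomputable def Ordinal.nadd (a b : Ordinal.{v}) : Ordinal.{v} :=
  max (⨆ x : Set.Iio a, Order.succ (Ordinal.nadd x.1 b))
    (⨆ x : Set.Iio b, Order.succ (Ordinal.nadd a x.1))
termination_by (a, b)
decreasing_by all_goals cases x; decreasing_tactic

namespace Ordinal

theorem nadd_def' (a b : Ordinal.{v}) : nadd a b = max (⨆ x : Set.Iio a, Order.succ (nadd x.1 b))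
    (⨆ x : Set.Iio b, Order.succ (nadd a x.1)) := by
  rw [nadd]

theorem nadd_lt_nadd_right' {a' a : Ordinal.{v}} (h : a' < a) (b : Ordinal.{v}) : nadd a' b < nadd a b := by
  rw [nadd_def' a b]
  refine lt_of_lt_of_le ?_ (le_max_left _ _)
  rw [Ordinal.lt_iSup_iff]
  exact ⟨⟨a', h⟩, Order.lt_succ _⟩

theorem nadd_lt_nadd_left' {b' b : Ordinal.{v}} (h : b' < b) (a : Ordinal.{v}) : nadd a b' < nadd a b := by
  rw [nadd_def' a b]
  refine lt_of_lt_of_le ?_ (le_max_right _ _)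
  rw [Ordinal.lt_iSup_iff]
  exact ⟨⟨b', h⟩, Order.lt_succ _⟩

theorem nadd_le_nadd_right' {a' a : Ordinal.{v}} (h : a' ≤ a) (b : Ordinal.{v}) : nadd a' b ≤ nadd a b := by
  rcases h.eq_or_lt with rfl | h
  · exact le_rfl
  · exact (nadd_lt_nadd_right' h b).le

theorem nadd_le_nadd_left' {b' b : Ordinal.{v}} (h : b' ≤ b) (a : Ordinal.{v}) : nadd a b' ≤ nadd a b := by
  rcases h.eq_or_lt with rfl | h
  · exact le_rfl
  · exact (nadd_lt_nadd_left' h a).le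

theorem nadd_le_iff' {a b c : Ordinal.{v}} :
    nadd a b ≤ c ↔ (∀ a' < a, nadd a' b < c) ∧ ∀ b' < b, nadd a b' < c := by
  rw [nadd_def' a b, max_le_iff, Ordinal.iSup_le_iff, Ordinal.iSup_le_iff]
  simp only [Subtype.forall, Set.mem_Iio, Order.succ_le_iff]

theorem nadd_lt_iff' {a b c : Ordinal.{v}} :
    c < nadd a b ↔ (∃ a' < a, c ≤ nadd a' b) ∨ ∃ b' < b, c ≤ nadd a b' := by
  rw [← not_le, nadd_le_iff']
  simp only [not_and_or, not_forall, not_lt, exists_prop]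

theorem nadd_comm' (a : Ordinal.{v}) : ∀ b : Ordinal.{v}, nadd a b = nadd b a := by
  refine WellFoundedLT.induction (motive := fun a => ∀ b : Ordinal.{v}, nadd a b = nadd b a) a (fun a iha => ?_)
  intro b
  refine WellFoundedLT.induction (motive := fun b => nadd a b = nadd b a) b (fun b ihb => ?_)
  apply le_antisymm
  · rw [nadd_le_iff']
    refine ⟨fun a' ha => ?_, fun b' hb => ?_⟩
    · rw [iha a' ha b]; exact nadd_lt_nadd_left' ha b
    · rw [ihb b' hb]; exact nadd_lt_nadd_right' hb a
  · rw [nadd_le_iff']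
    refine ⟨fun b' hb => ?_, fun a' ha => ?_⟩
    · rw [← ihb b' hb]; exact nadd_lt_nadd_left' hb a
    · rw [← iha a' ha b]; exact nadd_lt_nadd_right' ha b

theorem nadd_zero' (a : Ordinal.{v}) : nadd a 0 = a := by
  refine WellFoundedLT.induction (motive := fun a => nadd a 0 = a) a (fun a iha => ?_)
  apply le_antisymm
  · rw [nadd_le_iff']
    refine ⟨fun a' ha => ?_, fun b' hb => ?_⟩
    · rw [iha a' ha]; exact ha
    · simp at hb
  · by_contra h
    rw [not_le] at h
    have := nadd_lt_nadd_right' h 0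
    rw [iha _ h] at this
    exact lt_irrefl _ this

theorem nadd_assoc' (a : Ordinal.{v}) : ∀ b c : Ordinal.{v}, nadd (nadd a b) c = nadd a (nadd b c) := by
  refine WellFoundedLT.induction
    (motive := fun a => ∀ b c : Ordinal.{v}, nadd (nadd a b) c = nadd a (nadd b c)) a (fun a iha => ?_)
  intro b
  refine WellFoundedLT.induction
    (motive := fun b => ∀ c : Ordinal.{v}, nadd (nadd a b) c = nadd a (nadd b c)) b (fun b ihb => ?_)
  intro c
  refine WellFoundedLT.induction
    (motive := fun c => nadd (nadd a b) c = nadd a (nadd b c)) c (fun c ihc => ?_)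
  apply le_antisymm
  · rw [nadd_le_iff']
    constructor
    · intro d hd
      rcases nadd_lt_iff'.mp hd with ⟨a', ha, hd⟩ | ⟨b', hb, hd⟩
      · calc nadd d c ≤ nadd (nadd a' b) c := nadd_le_nadd_right' hd c
          _ = nadd a' (nadd b c) := iha a' ha b c
          _ < nadd a (nadd b c) := nadd_lt_nadd_right' ha _
      · calc nadd d c ≤ nadd (nadd a b') c := nadd_le_nadd_right' hd c
          _ = nadd a (nadd b' c) := ihb b' hb c
          _ < nadd a (nadd b c) := nadd_lt_nadd_left' (nadd_lt_nadd_right' hb c) a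
    · intro c' hc
      rw [ihc c' hc]
      exact nadd_lt_nadd_left' (nadd_lt_nadd_left' hc b) a
  · rw [nadd_le_iff']
    constructor
    · intro a' ha
      rw [← iha a' ha b c]
      exact nadd_lt_nadd_right' (nadd_lt_nadd_right' ha b) c
    · intro e he
      rcases nadd_lt_iff'.mp he with ⟨b', hb, he⟩ | ⟨c', hc, he⟩
      · calc nadd a e ≤ nadd a (nadd b' c) := nadd_le_nadd_left' he a
          _ = nadd (nadd a b') c := (ihb b' hb c).symm
          _ < nadd (nadd a b) c := nadd_lt_nadd_right' (nadd_lt_nadd_left' hb a) c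
      · calc nadd a e ≤ nadd a (nadd b c') := nadd_le_nadd_left' he a
          _ = nadd (nadd a b) c' := (ihc c' hc).symm
          _ < nadd (nadd a b) c := nadd_lt_nadd_left' hc _

end Ordinal

/-- A copy of `Ordinal` carrying the natural operations (old Mathlib `NatOrdinal`). -/
def NatOrdinal : Type (v + 1) := Ordinal.{v}

/-- The identity map `Ordinal → NatOrdinal`. -/
def Ordinal.toNatOrdinal (a : Ordinal.{v}) : NatOrdinal.{v} := a

/-- The identity map `NatOrdinal → Ordinal`. -/
def NatOrdinal.toOrdinal (a : NatOrdinal.{v}) : Ordinal.{v} := a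

noncomputable instance : Add NatOrdinal.{v} := ⟨fun a b => Ordinal.nadd a b⟩

instance : Zero NatOrdinal.{v} := ⟨(0 : Ordinal.{v})⟩

noncomputable instance : AddCommMonoid NatOrdinal.{v} where
  add_assoc a b c := Ordinal.nadd_assoc' a b c
  zero_add a := (Ordinal.nadd_comm' 0 a).trans (Ordinal.nadd_zero' a)
  add_zero a := Ordinal.nadd_zero' a
  add_comm a b := Ordinal.nadd_comm' a b
  nsmul := nsmulRec

infixl:65 " ♯ " => Ordinal.nadd

namespace Ordinal

theorem nadd_comm (a b : Ordinal.{v}) : a ♯ b = b ♯ a := nadd_comm' a b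

theorem nadd_assoc (a b c : Ordinal.{v}) : a ♯ b ♯ c = a ♯ (b ♯ c) := nadd_assoc' a b c

@[simp] theorem nadd_zero (a : Ordinal.{v}) : a ♯ 0 = a := nadd_zero' a

@[simp] theorem zero_nadd (a : Ordinal.{v}) : 0 ♯ a = a := by rw [nadd_comm, nadd_zero]

theorem nadd_le_iff {a b c : Ordinal.{v}} :
    a ♯ b ≤ c ↔ (∀ a' < a, a' ♯ b < c) ∧ ∀ b' < b, a ♯ b' < c := nadd_le_iff'

theorem lt_nadd_iff {a b c : Ordinal.{v}} :
    c < a ♯ b ↔ (∃ a' < a, c ≤ a' ♯ b) ∨ ∃ b' < b, c ≤ a ♯ b' := nadd_lt_iff'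

theorem nadd_lt_nadd_left {b' b : Ordinal.{v}} (h : b' < b) (a : Ordinal.{v}) :
    a ♯ b' < a ♯ b := nadd_lt_nadd_left' h a

theorem nadd_lt_nadd_right {a' a : Ordinal.{v}} (h : a' < a) (b : Ordinal.{v}) :
    a' ♯ b < a ♯ b := nadd_lt_nadd_right' h b

theorem nadd_le_nadd_left {b' b : Ordinal.{v}} (h : b' ≤ b) (a : Ordinal.{v}) :
    a ♯ b' ≤ a ♯ b := nadd_le_nadd_left' h a

theorem nadd_le_nadd_right {a' a : Ordinal.{v}} (h : a' ≤ a) (b : Ordinal.{v}) :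
    a' ♯ b ≤ a ♯ b := nadd_le_nadd_right' h b

theorem nadd_lt_nadd {a b c d : Ordinal.{v}} (h1 : a < b) (h2 : c < d) : a ♯ c < b ♯ d :=
  (nadd_lt_nadd_right h1 c).trans (nadd_lt_nadd_left h2 b)

theorem nadd_le_nadd {a b c d : Ordinal.{v}} (h1 : a ≤ b) (h2 : c ≤ d) : a ♯ c ≤ b ♯ d :=
  (nadd_le_nadd_right h1 c).trans (nadd_le_nadd_left h2 b)

theorem nadd_left_comm (a b c : Ordinal.{v}) : a ♯ (b ♯ c) = b ♯ (a ♯ c) := by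
  rw [← nadd_assoc, nadd_comm a b, nadd_assoc]

theorem nadd_right_comm (a b c : Ordinal.{v}) : a ♯ b ♯ c = a ♯ c ♯ b := by
  rw [nadd_assoc, nadd_comm b c, ← nadd_assoc]

theorem succ_nadd (a b : Ordinal.{v}) : Order.succ a ♯ b = Order.succ (a ♯ b) := by
  refine WellFoundedLT.induction (motive := fun b => Order.succ a ♯ b = Order.succ (a ♯ b)) b
    (fun b ihb => ?_)
  apply le_antisymm
  · rw [nadd_le_iff]
    refine ⟨fun a' ha => ?_, fun b' hb => ?_⟩
    · exact Order.lt_succ_iff.2 (nadd_le_nadd_right (Order.lt_succ_iff.1 ha) b)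
    · rw [ihb b' hb]; exact Order.succ_lt_succ_iff.2 (nadd_lt_nadd_left hb a)
  · exact Order.succ_le_of_lt (nadd_lt_nadd_right (Order.lt_succ a) b)

theorem nadd_succ (a b : Ordinal.{v}) : a ♯ Order.succ b = Order.succ (a ♯ b) := by
  rw [nadd_comm, succ_nadd, nadd_comm]

theorem nadd_nat (a : Ordinal.{v}) (n : ℕ) : a ♯ (n : Ordinal.{v}) = a + n := by
  induction n with
  | zero => simp
  | succ n ih => rw [Nat.cast_succ, add_one_eq_succ, nadd_succ, ih, ← add_succ]

theorem nat_nadd (a : Ordinal.{v}) (n : ℕ) : (n : Ordinal.{v}) ♯ a = a + n := by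
  rw [nadd_comm, nadd_nat]

theorem add_le_nadd (a b : Ordinal.{v}) : a + b ≤ a ♯ b := by
  refine WellFoundedLT.induction (motive := fun b => a + b ≤ a ♯ b) b (fun b ihb => ?_)
  refine le_of_forall_lt (fun z hz => ?_)
  rcases lt_or_ge z a with h | h
  · exact h.trans_le (by simpa using nadd_le_nadd_left (show (0:Ordinal.{v}) ≤ b from zero_le) a)
  · have h3 : a + (z - a) = z := Ordinal.add_sub_cancel_of_le h
    have hb : z - a < b := by rw [← h3] at hz; exact (add_lt_add_iff_left a).1 hz
    rw [← h3]
    exact (ihb _ hb).trans_lt (nadd_lt_nadd_left hb a)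

end Ordinal

open Ordinal Order

namespace Stmt4Aux

theorem nadd_add_le (p q r : Ordinal) : (p ♯ q) + r ≤ (p + r) ♯ q := by
  induction r using Ordinal.limitRecOn with
  | zero => simp
  | add_one r ih =>
    rw [add_one_eq_succ, add_succ (p ♯ q) r, add_succ p r, succ_nadd]
    exact succ_le_succ ih
  | limit r hr ih =>
    rw [(Ordinal.add_le_iff_of_isSuccLimit hr : p ♯ q + r ≤ _ ↔ _)]
    intro r' hr'
    exact (ih r' hr').trans (nadd_le_nadd_right (add_le_add_right hr'.le p) q)

theorem omega0_mul_nadd : ∀ a b : Ordinal, (ω * a) ♯ (ω * b) = ω * (a ♯ b) := by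
  intro a
  induction a using Ordinal.induction with
  | h a iha =>
  intro b
  induction b using Ordinal.induction with
  | h b ihb =>
  apply le_antisymm
  · rw [nadd_le_iff]
    constructor
    · intro x hx
      have hq : x / ω < a := (Ordinal.div_lt omega0_ne_zero).2 hx
      obtain ⟨n, hn⟩ := lt_omega0.1 (Ordinal.mod_lt x omega0_ne_zero)
      have hxe : x = (ω * (x / ω)) ♯ (n : Ordinal) := by
        rw [nadd_nat, ← hn, Ordinal.div_add_mod]
      calc x ♯ ω * b = ((ω * (x / ω)) ♯ (n : Ordinal)) ♯ ω * b := by rw [← hxe]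
        _ = ((ω * (x / ω)) ♯ ω * b) ♯ (n : Ordinal) := nadd_right_comm _ _ _
        _ = ω * ((x / ω) ♯ b) + n := by rw [iha _ hq, nadd_nat]
        _ < ω * ((x / ω) ♯ b) + ω := add_lt_add_right (nat_lt_omega0 n) _
        _ = ω * ((x / ω) ♯ b + 1) := by rw [mul_add_one]
        _ ≤ ω * (a ♯ b) := by
            apply mul_le_mul_right
            rw [← succ_eq_add_one]
            exact succ_le_of_lt (nadd_lt_nadd_right hq b)
    · intro x hx
      have hq : x / ω < b := (Ordinal.div_lt omega0_ne_zero).2 hx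
      obtain ⟨n, hn⟩ := lt_omega0.1 (Ordinal.mod_lt x omega0_ne_zero)
      have hxe : x = (ω * (x / ω)) ♯ (n : Ordinal) := by
        rw [nadd_nat, ← hn, Ordinal.div_add_mod]
      calc (ω * a) ♯ x = (ω * a) ♯ ((ω * (x / ω)) ♯ (n : Ordinal)) := by rw [← hxe]
        _ = ((ω * a) ♯ ω * (x / ω)) ♯ (n : Ordinal) := (nadd_assoc _ _ _).symm
        _ = ω * (a ♯ (x / ω)) + n := by rw [ihb _ hq, nadd_nat]
        _ < ω * (a ♯ (x / ω)) + ω := add_lt_add_right (nat_lt_omega0 n) _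
        _ = ω * (a ♯ (x / ω) + 1) := by rw [mul_add_one]
        _ ≤ ω * (a ♯ b) := by
            apply mul_le_mul_right
            rw [← succ_eq_add_one]
            exact succ_le_of_lt (nadd_lt_nadd_left hq a)
  · apply le_of_forall_lt
    intro z hz
    have hq : z / ω < a ♯ b := (Ordinal.div_lt omega0_ne_zero).2 hz
    obtain ⟨n, hn⟩ := lt_omega0.1 (Ordinal.mod_lt z omega0_ne_zero)
    have hze : z = ω * (z / ω) + n := by rw [← hn, Ordinal.div_add_mod]
    have hz1 : z < ω * (z / ω + 1) := by
      conv_lhs => rw [hze]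
      rw [mul_add_one]
      exact add_lt_add_right (nat_lt_omega0 n) _
    rcases lt_nadd_iff.1 hq with ⟨a', ha', hle⟩ | ⟨b', hb', hle⟩
    · calc z < ω * (z / ω + 1) := hz1
        _ ≤ ω * (a' ♯ b + 1) := by
            exact mul_le_mul_right (add_le_add_left hle 1) ω
        _ = ω * (a' ♯ b) + ω := by rw [mul_add_one]
        _ = ((ω * a') ♯ (ω * b)) + ω := by rw [iha _ ha']
        _ ≤ (ω * a' + ω) ♯ (ω * b) := nadd_add_le _ _ _
        _ = (ω * (a' + 1)) ♯ (ω * b) := by rw [mul_add_one]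
        _ ≤ (ω * a) ♯ (ω * b) := by
            apply nadd_le_nadd_right
            apply mul_le_mul_right
            rw [← succ_eq_add_one]
            exact succ_le_of_lt ha'
    · calc z < ω * (z / ω + 1) := hz1
        _ ≤ ω * (a ♯ b' + 1) := by
            exact mul_le_mul_right (add_le_add_left hle 1) ω
        _ = ω * (a ♯ b') + ω := by rw [mul_add_one]
        _ = ((ω * a) ♯ (ω * b')) + ω := by rw [ihb _ hb']
        _ = ((ω * b') ♯ (ω * a)) + ω := by rw [nadd_comm]
        _ ≤ (ω * b' + ω) ♯ (ω * a) := nadd_add_le _ _ _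
        _ = (ω * (b' + 1)) ♯ (ω * a) := by rw [mul_add_one]
        _ ≤ (ω * b) ♯ (ω * a) := by
            apply nadd_le_nadd_right
            apply mul_le_mul_right
            rw [← succ_eq_add_one]
            exact succ_le_of_lt hb'
        _ = (ω * a) ♯ (ω * b) := nadd_comm _ _


/-- `K1M B` : `ω ^ B` is closed under natural addition, and the "normal form"
natural addition law at base `ω ^ B`. -/
theorem K1M : ∀ B : Ordinal,
    (∀ x y : Ordinal, x < ω ^ B → y < ω ^ B → x ♯ y < ω ^ B) ∧
    (∀ (s t : ℕ) (x y : Ordinal), x < ω ^ B → y < ω ^ B →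
      (ω ^ B * s + x) ♯ (ω ^ B * t + y) = ω ^ B * ((s : Ordinal) + t) + (x ♯ y)) := by
  intro B
  induction B using Ordinal.induction with
  | h B ihB =>
  have hpos : (0 : Ordinal) < ω ^ B := opow_pos B omega0_pos
  have hne : (ω : Ordinal) ^ B ≠ 0 := hpos.ne'
  have hK : ∀ x y : Ordinal, x < ω ^ B → y < ω ^ B → x ♯ y < ω ^ B := by
    rcases Ordinal.zero_or_succ_or_isSuccLimit B with h0 | ⟨C, rfl⟩ | hlim
    · subst h0
      intro x y hx hy
      rw [opow_zero] at *
      rw [Ordinal.lt_one_iff_zero] at hx hy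
      subst hx; subst hy
      simpa using zero_lt_one
    · intro x y hx hy
      rw [opow_succ] at hx hy ⊢
      obtain ⟨p', hp', hxp⟩ := (lt_mul_iff_of_isSuccLimit isSuccLimit_omega0).1 hx
      obtain ⟨q', hq', hyq⟩ := (lt_mul_iff_of_isSuccLimit isSuccLimit_omega0).1 hy
      obtain ⟨p, rfl⟩ := lt_omega0.1 hp'
      obtain ⟨q, rfl⟩ := lt_omega0.1 hq'
      have hM := (ihB C (lt_succ C)).2 p q 0 0 (opow_pos C omega0_pos) (opow_pos C omega0_pos)
      simp only [add_zero, nadd_zero] at hM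
      calc x ♯ y < (ω ^ C * p) ♯ (ω ^ C * q) := nadd_lt_nadd hxp hyq
        _ = ω ^ C * ((p : Ordinal) + q) := hM
        _ = ω ^ C * ((p + q : ℕ) : Ordinal) := by rw [Nat.cast_add]
        _ < ω ^ C * ω := mul_lt_mul_of_pos_left (nat_lt_omega0 (p + q)) (opow_pos C omega0_pos)
    · intro x y hx hy
      obtain ⟨C, hC, hxC⟩ := (lt_opow_of_isSuccLimit omega0_ne_zero hlim).1 hx
      obtain ⟨D, hD, hyD⟩ := (lt_opow_of_isSuccLimit omega0_ne_zero hlim).1 hy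
      have hCD : max C D < B := max_lt hC hD
      have h1 : x < ω ^ max C D := hxC.trans_le (opow_le_opow_right omega0_pos (le_max_left _ _))
      have h2 : y < ω ^ max C D := hyD.trans_le (opow_le_opow_right omega0_pos (le_max_right _ _))
      exact lt_of_lt_of_le ((ihB _ hCD).1 x y h1 h2)
        (opow_le_opow_right omega0_pos hCD.le)
  refine ⟨hK, ?_⟩
  suffices hM : ∀ N : ℕ, ∀ s t : ℕ, s + t ≤ N → ∀ x y : Ordinal, x < ω ^ B → y < ω ^ B →
      (ω ^ B * s + x) ♯ (ω ^ B * t + y) = ω ^ B * ((s : Ordinal) + t) + (x ♯ y) by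
    intro s t x y hx hy
    exact hM (s + t) s t le_rfl x y hx hy
  intro N
  induction N with
  | zero =>
    intro s t hst x y hx hy
    obtain ⟨rfl, rfl⟩ : s = 0 ∧ t = 0 := by omega
    simp
  | succ N ihN =>
    intro s t hst x
    induction x using Ordinal.induction with
    | h x ihx =>
    intro y
    induction y using Ordinal.induction with
    | h y ihy =>
    intro hx hy
    apply le_antisymm
    · rw [nadd_le_iff]
      constructor
      · intro u hu
        rcases lt_or_ge u (ω ^ B * s) with h1 | h2
        · -- divide u by ω ^ B
          have hq : u / ω ^ B < (s : Ordinal) := (Ordinal.div_lt hne).2 h1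
          obtain ⟨p, hp⟩ := lt_omega0.1 (hq.trans (nat_lt_omega0 s))
          have hps : p < s := by exact_mod_cast hp ▸ hq
          have hr : u % ω ^ B < ω ^ B := Ordinal.mod_lt u hne
          have hue : ω ^ B * p + u % ω ^ B = u := by rw [← hp, Ordinal.div_add_mod]
          have heq := ihN p t (by omega) (u % ω ^ B) y hr hy
          have heq2 : u ♯ (ω ^ B * t + y) = ω ^ B * ((p : Ordinal) + t) + (u % ω ^ B ♯ y) := by
            conv_lhs => rw [← hue]
            exact heq
          calc u ♯ (ω ^ B * t + y) = ω ^ B * ((p : Ordinal) + t) + (u % ω ^ B ♯ y) := heq2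
            _ < ω ^ B * ((p : Ordinal) + t) + ω ^ B := add_lt_add_right (hK _ _ hr hy) _
            _ = ω ^ B * ((p : Ordinal) + t + 1) := by rw [mul_add_one]
            _ ≤ ω ^ B * ((s : Ordinal) + t) := by
                apply mul_le_mul_right
                have : ((p : Ordinal) + t + 1) = ((p + t + 1 : ℕ) : Ordinal) := by push_cast; ring
                rw [this]
                exact_mod_cast Nat.cast_le.2 (by omega : p + t + 1 ≤ s + t)
            _ ≤ ω ^ B * ((s : Ordinal) + t) + (x ♯ y) := le_self_add
        · have hx'' : u - ω ^ B * s < x := by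
            have h3 : ω ^ B * s + (u - ω ^ B * s) = u := Ordinal.add_sub_cancel_of_le h2
            rw [← h3] at hu
            exact (add_lt_add_iff_left _).1 hu
          rw [← Ordinal.add_sub_cancel_of_le h2, ihx _ hx'' y (hx''.trans hx) hy]
          exact add_lt_add_right (nadd_lt_nadd_right hx'' y) _
      · intro u hu
        rcases lt_or_ge u (ω ^ B * t) with h1 | h2
        · have hq : u / ω ^ B < (t : Ordinal) := (Ordinal.div_lt hne).2 h1
          obtain ⟨p, hp⟩ := lt_omega0.1 (hq.trans (nat_lt_omega0 t))
          have hps : p < t := by exact_mod_cast hp ▸ hq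
          have hr : u % ω ^ B < ω ^ B := Ordinal.mod_lt u hne
          have hue : ω ^ B * p + u % ω ^ B = u := by rw [← hp, Ordinal.div_add_mod]
          have heq := ihN s p (by omega) x (u % ω ^ B) hx hr
          have heq2 : (ω ^ B * s + x) ♯ u = ω ^ B * ((s : Ordinal) + p) + (x ♯ u % ω ^ B) := by
            conv_lhs => rw [← hue]
            exact heq
          calc (ω ^ B * s + x) ♯ u = ω ^ B * ((s : Ordinal) + p) + (x ♯ u % ω ^ B) := heq2
            _ < ω ^ B * ((s : Ordinal) + p) + ω ^ B := add_lt_add_right (hK _ _ hx hr) _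
            _ = ω ^ B * ((s : Ordinal) + p + 1) := by rw [mul_add_one]
            _ ≤ ω ^ B * ((s : Ordinal) + t) := by
                apply mul_le_mul_right
                have h4 : ((s : Ordinal) + p + 1) = ((s + p + 1 : ℕ) : Ordinal) := by
                  push_cast; ring
                have h5 : ((s : Ordinal) + t) = ((s + t : ℕ) : Ordinal) := by push_cast; ring
                rw [h4, h5]
                exact_mod_cast Nat.cast_le.2 (by omega : s + p + 1 ≤ s + t)
            _ ≤ ω ^ B * ((s : Ordinal) + t) + (x ♯ y) := le_self_add
        · have hy'' : u - ω ^ B * t < y := by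
            have h3 : ω ^ B * t + (u - ω ^ B * t) = u := Ordinal.add_sub_cancel_of_le h2
            rw [← h3] at hu
            exact (add_lt_add_iff_left _).1 hu
          rw [← Ordinal.add_sub_cancel_of_le h2, ihy _ hy'' hx (hy''.trans hy)]
          exact add_lt_add_right (nadd_lt_nadd_left hy'' x) _
    · apply le_of_forall_lt
      intro z hz
      rcases lt_or_ge z (ω ^ B * ((s : Ordinal) + t)) with h1 | h2
      · refine h1.trans_le ?_
        calc ω ^ B * ((s : Ordinal) + t) = ω ^ B * s + ω ^ B * t := mul_add _ _ _
          _ ≤ (ω ^ B * s) ♯ (ω ^ B * t) := add_le_nadd _ _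
          _ ≤ (ω ^ B * s + x) ♯ (ω ^ B * t + y) :=
              nadd_le_nadd (le_self_add) (le_self_add)
      · have hw : z - ω ^ B * ((s : Ordinal) + t) < x ♯ y := by
          have h3 := Ordinal.add_sub_cancel_of_le h2
          rw [← h3] at hz
          exact (add_lt_add_iff_left _).1 hz
        have hze : z = ω ^ B * ((s : Ordinal) + t) + (z - ω ^ B * ((s : Ordinal) + t)) :=
          (Ordinal.add_sub_cancel_of_le h2).symm
        rcases lt_nadd_iff.1 hw with ⟨x', hx', hle⟩ | ⟨y', hy', hle⟩
        · calc z = ω ^ B * ((s : Ordinal) + t) + (z - ω ^ B * ((s : Ordinal) + t)) := hze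
            _ ≤ ω ^ B * ((s : Ordinal) + t) + (x' ♯ y) := add_le_add_right hle _
            _ = (ω ^ B * s + x') ♯ (ω ^ B * t + y) := (ihx x' hx' y (hx'.trans hx) hy).symm
            _ < (ω ^ B * s + x) ♯ (ω ^ B * t + y) :=
                nadd_lt_nadd_right (add_lt_add_right hx' _) _
        · calc z = ω ^ B * ((s : Ordinal) + t) + (z - ω ^ B * ((s : Ordinal) + t)) := hze
            _ ≤ ω ^ B * ((s : Ordinal) + t) + (x ♯ y') := add_le_add_right hle _
            _ = (ω ^ B * s + x) ♯ (ω ^ B * t + y') := (ihy y' hy' hx (hy'.trans hy)).symm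
            _ < (ω ^ B * s + x) ♯ (ω ^ B * t + y) :=
                nadd_lt_nadd_left (add_lt_add_right hy' _) _


/-- base-`ω^B` finite-multiple natural addition -/
theorem base_nadd (B : Ordinal) (s t : ℕ) :
    (ω ^ B * s) ♯ (ω ^ B * t) = ω ^ B * ((s + t : ℕ) : Ordinal) := by
  have h := (K1M B).2 s t 0 0 (opow_pos B omega0_pos) (opow_pos B omega0_pos)
  simp only [add_zero, nadd_zero] at h
  rw [h, Nat.cast_add]

/-- `2 ^ (ω*c + n) = ω^c * 2^n` -/
theorem two_opow (c : Ordinal) (n : ℕ) :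
    (2 : Ordinal) ^ (ω * c + n) = ω ^ c * ((2 ^ n : ℕ) : Ordinal) := by
  have h2 : (2 : Ordinal) ^ (ω : Ordinal) = ω := by
    have := opow_omega0 (a := 2) one_lt_two (by exact_mod_cast nat_lt_omega0 2)
    exact this
  rw [opow_add, opow_mul, h2, opow_natCast]
  norm_num

/-- normal form nadd -/
theorem nf_nadd (a c : Ordinal) (n m : ℕ) :
    (ω * a + n) ♯ (ω * c + m) = ω * (a ♯ c) + ((n + m : ℕ) : Ordinal) := by
  rw [← nadd_nat (ω * a) n, ← nadd_nat (ω * c) m, ← nadd_nat (ω * (a ♯ c)) (n + m)]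
  rw [nadd_assoc, ← nadd_assoc (n : Ordinal), nadd_comm (n : Ordinal) _, nadd_assoc,
    ← nadd_assoc, omega0_mul_nadd]
  congr 1
  rw [nadd_nat, Nat.cast_add]

theorem monomial_lt (c A : Ordinal) (hcA : c < A) (k : ℕ) : ω ^ c * (k : Ordinal) < ω ^ A := by
  calc ω ^ c * (k : Ordinal) < ω ^ c * ω := mul_lt_mul_of_pos_left (nat_lt_omega0 k)
        (opow_pos c omega0_pos)
    _ = ω ^ succ c := (opow_succ ω c).symm
    _ ≤ ω ^ A := opow_le_opow_right omega0_pos (succ_le_of_lt hcA)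

/-- THE key step inequality. -/
theorem main_step {d l u S : Ordinal} (hd : 0 < d) (hdl : d < l)
    (hS : S < 2 ^ ((l - d) ♯ u)) : (2 : Ordinal) ^ (d ♯ u) ♯ S < 2 ^ (l ♯ u) := by
  -- decompose by division by ω
  obtain ⟨n, hn⟩ := lt_omega0.1 (Ordinal.mod_lt l omega0_ne_zero)
  obtain ⟨dd, hdd⟩ := lt_omega0.1 (Ordinal.mod_lt d omega0_ne_zero)
  obtain ⟨m, hm⟩ := lt_omega0.1 (Ordinal.mod_lt u omega0_ne_zero)
  set a := l / ω with ha
  set e := d / ω with he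
  set c := u / ω with hc
  have hl : ω * a + (n : Ordinal) = l := by rw [← hn]; exact Ordinal.div_add_mod l ω
  have hdec : ω * e + (dd : Ordinal) = d := by rw [← hdd]; exact Ordinal.div_add_mod d ω
  have hu : ω * c + (m : Ordinal) = u := by rw [← hm]; exact Ordinal.div_add_mod u ω
  have hea : e ≤ a := by
    by_contra hlt
    push_neg at hlt
    have : l < d := by
      calc l = ω * a + (n : Ordinal) := hl.symm
        _ < ω * a + ω := add_lt_add_right (nat_lt_omega0 n) _
        _ = ω * (a + 1) := by rw [mul_add_one]
        _ ≤ ω * e := mul_le_mul_right (by rw [← succ_eq_add_one]; exact succ_le_of_lt hlt) ω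
        _ ≤ ω * e + (dd : Ordinal) := le_self_add
        _ = d := hdec
    exact absurd hdl (asymm this)
  rcases eq_or_lt_of_le hea with heq | hlt
  · -- case e = a : finite difference
    have hdn : dd < n := by
      have h6 : ω * a + (dd : Ordinal) < ω * a + (n : Ordinal) := by
        rw [hl]; rw [← hdec, heq] at hdl; exact hdl
      exact_mod_cast (add_lt_add_iff_left _).1 h6
    have hld : l - d = ((n - dd : ℕ) : Ordinal) := by
      have h7 : d + ((n - dd : ℕ) : Ordinal) = l := by
        rw [← hdec, heq, ← hl, add_assoc]
        congr 1
        rw [← Nat.cast_add]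
        congr 1
        omega
      rw [← h7, Ordinal.add_sub_cancel]
    have hdu : d ♯ u = ω * (a ♯ c) + ((dd + m : ℕ) : Ordinal) := by
      rw [← hdec, ← hu, heq, nf_nadd]
    have hldu : (l - d) ♯ u = ω * c + ((m + (n - dd) : ℕ) : Ordinal) := by
      rw [hld, ← hu, nat_nadd, add_assoc, ← Nat.cast_add]
    have hlu : l ♯ u = ω * (a ♯ c) + ((n + m : ℕ) : Ordinal) := by
      rw [← hl, ← hu, nf_nadd]
    rcases eq_zero_or_pos a with ha0 | ha0
    · -- a = 0 : all-finite case
      have hc0 : a ♯ c = c := by rw [ha0, zero_nadd]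
      have hdd1 : 1 ≤ dd := by
        by_contra h0
        push_neg at h0
        interval_cases dd
        · rw [← hdec, heq, ha0, mul_zero, zero_add] at hd
          simp at hd
      have natfact : 2 ^ (dd + m) + 2 ^ (m + (n - dd)) ≤ 2 ^ (n + m) := by
        have h1 : dd + m ≤ n + m - 1 := by omega
        have h2 : m + (n - dd) ≤ n + m - 1 := by omega
        have h3 : n + m - 1 + 1 = n + m := by omega
        calc 2 ^ (dd + m) + 2 ^ (m + (n - dd))
            ≤ 2 ^ (n + m - 1) + 2 ^ (n + m - 1) :=
              add_le_add (Nat.pow_le_pow_right (by norm_num) h1)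
                (Nat.pow_le_pow_right (by norm_num) h2)
          _ = 2 ^ (n + m - 1 + 1) := by rw [pow_succ]; omega
          _ = 2 ^ (n + m) := by rw [h3]
      calc (2 : Ordinal) ^ (d ♯ u) ♯ S < 2 ^ (d ♯ u) ♯ 2 ^ ((l - d) ♯ u) :=
            nadd_lt_nadd_left hS _
        _ = (ω ^ c * ((2 ^ (dd + m) : ℕ) : Ordinal)) ♯
              (ω ^ c * ((2 ^ (m + (n - dd)) : ℕ) : Ordinal)) := by
            rw [hdu, hldu, hc0, two_opow, two_opow]
        _ = ω ^ c * ((2 ^ (dd + m) + 2 ^ (m + (n - dd)) : ℕ) : Ordinal) := base_nadd _ _ _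
        _ ≤ ω ^ c * ((2 ^ (n + m) : ℕ) : Ordinal) :=
            mul_le_mul_right (by exact_mod_cast natfact) _
        _ = 2 ^ (l ♯ u) := by rw [hlu, two_opow, hc0]
    · -- a > 0
      have hcA : c < a ♯ c := by
        calc c = 0 ♯ c := (zero_nadd c).symm
          _ < a ♯ c := nadd_lt_nadd_right ha0 c
      have hSlt : S < ω ^ (a ♯ c) := by
        calc S < 2 ^ ((l - d) ♯ u) := hS
          _ = ω ^ c * ((2 ^ (m + (n - dd)) : ℕ) : Ordinal) := by rw [hldu, two_opow]
          _ < ω ^ (a ♯ c) := monomial_lt _ _ hcA _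
      have natfact : 2 ^ (dd + m) + 1 ≤ 2 ^ (n + m) := by
        have h1 : 2 ^ (dd + m) + 1 ≤ 2 ^ (dd + m) + 2 ^ (dd + m) := by
          have := Nat.one_le_two_pow (n := dd + m); omega
        have h2 : dd + m + 1 ≤ n + m := by omega
        calc 2 ^ (dd + m) + 1 ≤ 2 ^ (dd + m) + 2 ^ (dd + m) := h1
          _ = 2 ^ (dd + m + 1) := by rw [pow_succ]; omega
          _ ≤ 2 ^ (n + m) := Nat.pow_le_pow_right (by norm_num) h2
      calc (2 : Ordinal) ^ (d ♯ u) ♯ S < 2 ^ (d ♯ u) ♯ ω ^ (a ♯ c) :=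
            nadd_lt_nadd_left hSlt _
        _ = (ω ^ (a ♯ c) * ((2 ^ (dd + m) : ℕ) : Ordinal)) ♯
              (ω ^ (a ♯ c) * ((1 : ℕ) : Ordinal)) := by
            rw [hdu, two_opow, Nat.cast_one, mul_one]
        _ = ω ^ (a ♯ c) * ((2 ^ (dd + m) + 1 : ℕ) : Ordinal) := base_nadd _ _ _
        _ ≤ ω ^ (a ♯ c) * ((2 ^ (n + m) : ℕ) : Ordinal) :=
            mul_le_mul_right (by exact_mod_cast natfact) _
        _ = 2 ^ (l ♯ u) := by rw [hlu, two_opow]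
  · -- case e < a
    have hf0 : a - e ≠ 0 := by
      intro h
      exact absurd (Ordinal.sub_eq_zero_iff_le.1 h) (not_le_of_gt hlt)
    have hdf : d + (ω * (a - e) + (n : Ordinal)) = l := by
      have h1 : (dd : Ordinal) + ω * (a - e) = ω * (a - e) := by
        have hff : 1 + (a - e - 1) = a - e :=
          Ordinal.add_sub_cancel_of_le (Ordinal.one_le_iff_ne_zero.2 hf0)
        rw [← hff, mul_add, mul_one, ← add_assoc, Ordinal.add_omega0 (nat_lt_omega0 dd)]
      calc d + (ω * (a - e) + (n : Ordinal))
          = ω * e + (((dd : Ordinal) + ω * (a - e)) + (n : Ordinal)) := by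
            rw [← hdec, add_assoc, add_assoc]
        _ = ω * e + (ω * (a - e) + (n : Ordinal)) := by rw [h1]
        _ = (ω * e + ω * (a - e)) + (n : Ordinal) := by rw [add_assoc]
        _ = ω * (e + (a - e)) + (n : Ordinal) := by rw [mul_add]
        _ = ω * a + (n : Ordinal) := by rw [Ordinal.add_sub_cancel_of_le hlt.le]
        _ = l := hl
    have hld : l - d = ω * (a - e) + (n : Ordinal) := by rw [← hdf, Ordinal.add_sub_cancel]
    have hdu : d ♯ u = ω * (e ♯ c) + ((dd + m : ℕ) : Ordinal) := by
      rw [← hdec, ← hu, nf_nadd]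
    have hldu : (l - d) ♯ u = ω * ((a - e) ♯ c) + ((n + m : ℕ) : Ordinal) := by
      rw [hld, ← hu, nf_nadd]
    have hlu : l ♯ u = ω * (a ♯ c) + ((n + m : ℕ) : Ordinal) := by
      rw [← hl, ← hu, nf_nadd]
    have heA : e ♯ c < a ♯ c := nadd_lt_nadd_right hlt c
    have hfA : (a - e) ♯ c ≤ a ♯ c := nadd_le_nadd_right (Ordinal.sub_le_self a e) c
    have hAne : (ω : Ordinal) ^ (a ♯ c) ≠ 0 := (opow_pos _ omega0_pos).ne'
    have hfirst : (2 : Ordinal) ^ (d ♯ u) < ω ^ (a ♯ c) := by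
      rw [hdu, two_opow]
      exact monomial_lt _ _ heA _
    have hSbound : S < ω ^ (a ♯ c) * ((2 ^ (n + m) : ℕ) : Ordinal) := by
      calc S < 2 ^ ((l - d) ♯ u) := hS
        _ = ω ^ ((a - e) ♯ c) * ((2 ^ (n + m) : ℕ) : Ordinal) := by rw [hldu, two_opow]
        _ ≤ ω ^ (a ♯ c) * ((2 ^ (n + m) : ℕ) : Ordinal) :=
            mul_le_mul_left (opow_le_opow_right omega0_pos hfA) _
    obtain ⟨p, hp⟩ := lt_omega0.1 (((Ordinal.div_lt hAne).2 hSbound).trans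
      (nat_lt_omega0 (2 ^ (n + m))))
    have hp2 : p < 2 ^ (n + m) := by
      have := (Ordinal.div_lt hAne).2 hSbound
      rw [hp] at this
      exact_mod_cast this
    have hτ : S % ω ^ (a ♯ c) < ω ^ (a ♯ c) := Ordinal.mod_lt S hAne
    have hSe : ω ^ (a ♯ c) * (p : Ordinal) + S % ω ^ (a ♯ c) = S := by
      rw [← hp]; exact Ordinal.div_add_mod S _
    calc (2 : Ordinal) ^ (d ♯ u) ♯ S
        = 2 ^ (d ♯ u) ♯ (ω ^ (a ♯ c) * (p : Ordinal) + S % ω ^ (a ♯ c)) := by rw [hSe]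
      _ ≤ 2 ^ (d ♯ u) ♯ ((ω ^ (a ♯ c) * (p : Ordinal)) ♯ S % ω ^ (a ♯ c)) :=
          nadd_le_nadd_left (add_le_nadd _ _) _
      _ = (ω ^ (a ♯ c) * (p : Ordinal)) ♯ (S % ω ^ (a ♯ c) ♯ 2 ^ (d ♯ u)) := by
          rw [nadd_comm ((2 : Ordinal) ^ (d ♯ u)) _, nadd_assoc]
      _ < (ω ^ (a ♯ c) * (p : Ordinal)) ♯ ω ^ (a ♯ c) :=
          nadd_lt_nadd_left ((K1M (a ♯ c)).1 _ _ hτ hfirst) _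
      _ = (ω ^ (a ♯ c) * (p : Ordinal)) ♯ (ω ^ (a ♯ c) * ((1 : ℕ) : Ordinal)) := by
          rw [Nat.cast_one, mul_one]
      _ = ω ^ (a ♯ c) * ((p + 1 : ℕ) : Ordinal) := base_nadd _ _ _
      _ ≤ ω ^ (a ♯ c) * ((2 ^ (n + m) : ℕ) : Ordinal) :=
          mul_le_mul_right (by exact_mod_cast Nat.cast_le.2 (by omega : p + 1 ≤ 2 ^ (n + m))) _
      _ = 2 ^ (l ♯ u) := by rw [hlu, two_opow]


/-- A "box" is a list of (lower, upper) bound pairs. -/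
abbrev OBox := List (Ordinal × Ordinal)

def inBox (b : OBox) (w : List Ordinal) : Prop :=
  List.Forall₂ (fun p v => p.1 ≤ v ∧ v < p.2) b w

/-- natural sum of the side lengths of a box -/
noncomputable def lenSum : OBox → Ordinal
  | [] => 0
  | p :: b => (p.2 - p.1) ♯ lenSum b

/-- split a box at a pivot vector -/
noncomputable def pieces : OBox → List Ordinal → List OBox
  | (l, u) :: b, r :: w =>
      (if l < r then [(l, r) :: b] else []) ++ (pieces b w).map (fun pb => (r, u) :: pb)
  | _, _ => []

/-- measure of a family of boxes, with exponents shifted by `γ` -/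
noncomputable def famMes (γ : Ordinal) : List OBox → Ordinal
  | [] => 0
  | b :: L => (2 : Ordinal) ^ (γ ♯ lenSum b) ♯ famMes γ L

theorem famMes_append (γ : Ordinal) (L M : List OBox) :
    famMes γ (L ++ M) = famMes γ L ♯ famMes γ M := by
  induction L with
  | nil => simp [famMes]
  | cons b L ih => rw [List.cons_append, famMes, famMes, ih, nadd_assoc]

theorem famMes_map_cons (γ r u : Ordinal) (L : List OBox) :
    famMes γ (L.map fun pb => (r, u) :: pb) = famMes (γ ♯ (u - r)) L := by
  induction L with
  | nil => simp [famMes]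
  | cons b L ih =>
    rw [List.map_cons, famMes, famMes, ih, lenSum]
    rw [← nadd_assoc]

theorem famMes_pos_mono {γ : Ordinal} {L M : List OBox} (h : famMes γ M < (2:Ordinal) ^ γ) :
    True := trivial

/-- THE splitting inequality: the total measure of the pieces of a box that contains the
pivot is strictly less than the measure of the box. -/
theorem star : ∀ (b : OBox) (w : List Ordinal) (γ : Ordinal), inBox b w →
    famMes γ (pieces b w) < 2 ^ (γ ♯ lenSum b) := by
  intro b
  induction b with
  | nil =>
    intro w γ h
    cases h
    simp only [pieces, famMes]
    exact opow_pos _ zero_lt_two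
  | cons p b' ih =>
    intro w γ h
    obtain ⟨l, u⟩ := p
    cases h with
    | cons hpr h' =>
    rename_i r w'
    obtain ⟨hlr, hru⟩ := hpr
    have hlu : l ≤ u := hlr.trans hru.le
    have IH := ih w' (γ ♯ (u - r)) h'
    rw [pieces, famMes_append, famMes_map_cons]
    by_cases hlr2 : l < r
    · simp only [if_pos hlr2]
      have hd : 0 < r - l := by
        rw [pos_iff_ne_zero]
        intro h0
        exact absurd (Ordinal.sub_eq_zero_iff_le.1 h0) (not_le_of_gt hlr2)
      have hdl : r - l < u - l := by
        have h1 : l + (r - l) = r := Ordinal.add_sub_cancel_of_le hlr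
        have h2 : l + (u - l) = u := Ordinal.add_sub_cancel_of_le hlu
        have := hru
        rw [← h1, ← h2] at this
        exact (add_lt_add_iff_left l).1 this
      have hsub : (u - l) - (r - l) = u - r := by
        have h3 : (r - l) + (u - r) = u - l := by
          have h4 : l + ((r - l) + (u - r)) = l + (u - l) := by
            rw [← add_assoc, Ordinal.add_sub_cancel_of_le hlr,
              Ordinal.add_sub_cancel_of_le hru.le, Ordinal.add_sub_cancel_of_le hlu]
          exact le_antisymm ((add_le_add_iff_left l).1 h4.le) ((add_le_add_iff_left l).1 h4.ge)
        rw [← h3, Ordinal.add_sub_cancel]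
      have hmain := main_step hd hdl (u := γ ♯ lenSum b')
        (S := famMes (γ ♯ (u - r)) (pieces b' w')) (by
          rw [hsub]
          calc famMes (γ ♯ (u - r)) (pieces b' w') < 2 ^ ((γ ♯ (u - r)) ♯ lenSum b') := IH
            _ = 2 ^ ((u - r) ♯ (γ ♯ lenSum b')) := by rw [nadd_assoc, nadd_left_comm])
      calc famMes γ [(l, r) :: b'] ♯ famMes (γ ♯ (u - r)) (pieces b' w')
          = 2 ^ ((r - l) ♯ (γ ♯ lenSum b')) ♯ famMes (γ ♯ (u - r)) (pieces b' w') := by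
            simp only [famMes, lenSum, nadd_zero]
            rw [nadd_left_comm]
        _ < 2 ^ ((u - l) ♯ (γ ♯ lenSum b')) := hmain
        _ = 2 ^ (γ ♯ lenSum ((l, u) :: b')) := by
            simp only [lenSum]
            rw [nadd_left_comm]
    · simp only [if_neg hlr2]
      have hrl : r = l := le_antisymm (not_lt.1 hlr2) hlr
      rw [famMes, zero_nadd, lenSum]
      calc famMes (γ ♯ (u - r)) (pieces b' w') < 2 ^ ((γ ♯ (u - r)) ♯ lenSum b') := IH
        _ = 2 ^ (γ ♯ ((u - l) ♯ lenSum b')) := by rw [hrl, nadd_assoc]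

/-- covering: any box element strictly below the pivot in some coordinate lies in a piece. -/
theorem cover : ∀ (b : OBox) (w w' : List Ordinal), inBox b w → inBox b w' →
    (∃ pr ∈ w'.zip w, pr.1 < pr.2) → ∃ pb ∈ pieces b w, inBox pb w' := by
  intro b
  induction b with
  | nil =>
    intro w w' hw hw' hz
    cases hw; cases hw'
    simp at hz
  | cons p b' ih =>
    intro w w' hw hw' hz
    obtain ⟨l, u⟩ := p
    cases hw with
    | cons hpr hwt =>
    rename_i r wr
    cases hw' with
    | cons hpv hvt =>
    rename_i v wv
    rcases lt_or_ge v r with hvr | hrv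
    · refine ⟨(l, r) :: b', ?_, ?_⟩
      · rw [pieces]
        have : l < r := lt_of_le_of_lt hpv.1 hvr
        simp [this]
      · exact List.Forall₂.cons ⟨hpv.1, hvr⟩ hvt
    · have hz' : ∃ pr ∈ wv.zip wr, pr.1 < pr.2 := by
        rcases hz with ⟨pr, hpr2, hlt2⟩
        rw [List.zip_cons_cons, List.mem_cons] at hpr2
        rcases hpr2 with rfl | h2
        · exact absurd hlt2 (not_lt.2 hrv)
        · exact ⟨pr, h2, hlt2⟩
      obtain ⟨pb, hpb, hmem⟩ := ih wr wv hwt hvt hz'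
      refine ⟨(r, u) :: pb, ?_, ?_⟩
      · rw [pieces, List.mem_append]
        right
        exact List.mem_map_of_mem hpb
      · exact List.Forall₂.cons ⟨hrv, hpv.2⟩ hmem


theorem forall₂_map_map {α β γ' : Type*} (P : β → γ' → Prop) (f : α → β) (g : α → γ') :
    ∀ L : List α, (∀ x ∈ L, P (f x) (g x)) → List.Forall₂ P (L.map f) (L.map g) := by
  intro L
  induction L with
  | nil => intro _; simp
  | cons x L ih =>
    intro h
    simp only [List.map_cons, List.forall₂_cons]
    exact ⟨h x List.mem_cons_self, ih fun y hy => h y (List.mem_cons_of_mem x hy)⟩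

theorem lenSum_zero_map {α : Type*} (f : α → Ordinal) :
    ∀ L : List α, lenSum (L.map fun x => ((0 : Ordinal), f x)) =
      (L.map f).foldr (· ♯ ·) 0 := by
  intro L
  induction L with
  | nil => simp [lenSum]
  | cons x L ih => simp only [List.map_cons, lenSum, List.foldr_cons, ih, Ordinal.sub_zero]

theorem toOrdinal_list_sum : ∀ L : List NatOrdinal,
    NatOrdinal.toOrdinal L.sum = (L.map NatOrdinal.toOrdinal).foldr (· ♯ ·) 0 := by
  intro L
  induction L with
  | nil => rfl
  | cons x L ih =>
    simp only [List.sum_cons, List.map_cons, List.foldr_cons, ← ih]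
    rfl


end Stmt4Aux

open Stmt4Aux

/-- if each `R i` has height at most `α i`, then the converse of the one-step
extension relation on `H(R₁ ∪ ⋯ ∪ R_k)` is well-founded and the rank of the empty sequence
is at most `2 ^ (α₁ ⊕ ⋯ ⊕ α_k)`, where `⊕` is the natural (Hessenberg) sum. -/
theorem stmt_4 {I : Type u} (k : ℕ) (R : Fin k → I → I → Prop) (a : Fin k → Ordinal.{u})
    (hht : ∀ i, ∃ hwf : WellFounded (R i), ∀ x : I, WFRank hwf x < a i) :
    ∃ hwf : WellFounded (HExt fun x y => ∃ i, R i x y),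
      WFRank hwf ⟨[], List.Pairwise.nil⟩ ≤
        (2 : Ordinal) ^ NatOrdinal.toOrdinal (∑ i, Ordinal.toNatOrdinal (a i)) := by
  classical
  choose hwf hlt using hht
  set r : I → I → Prop := fun x y => ∃ i, R i x y with hr
  -- the spine of rank functions and bounds
  set ρs : List ((I → Ordinal.{u}) × Ordinal.{u}) :=
    (List.finRange k).map (fun i => (fun x => WFRank (hwf i) x, a i)) with hρs
  set wv : I → List Ordinal.{u} := fun y => ρs.map (fun p => p.1 y) with hwv
  set box0 : OBox := ρs.map (fun p => ((0 : Ordinal), p.2)) with hbox0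
  set legal : List I → I → Prop := fun s y => ∀ x ∈ s, r y x with hlegal
  set Inv : List I → List OBox → Prop :=
    fun s L => ∀ y, legal s y → ∃ b ∈ L, inBox b (wv y) with hInvDef
  -- initial invariant
  have hInv0 : ∀ s : List I, Inv s [box0] := by
    intro s y _
    refine ⟨box0, List.mem_singleton_self _, ?_⟩
    rw [hbox0, hwv]
    apply forall₂_map_map
    intro p hp
    rw [hρs] at hp
    obtain ⟨i, _, rfl⟩ := List.mem_map.1 hp
    exact ⟨zero_le, hlt i y⟩
  -- step : splitting the invariant at a new element
  have hstep : ∀ (s : List I) (y : I) (L : List OBox), Inv s L → legal s y →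
      ∃ L', Inv (s ++ [y]) L' ∧ famMes 0 L' < famMes 0 L := by
    intro s y L hInv hleg
    obtain ⟨b, hbL, hby⟩ := hInv y hleg
    obtain ⟨L1, L2, rfl⟩ := List.append_of_mem hbL
    refine ⟨L1 ++ pieces b (wv y) ++ L2, ?_, ?_⟩
    · intro z hlegz
      have hlegsz : legal s z := fun x hx => hlegz x (List.mem_append_left _ hx)
      have hzy : r z y := hlegz y (List.mem_append_right _ (List.mem_singleton_self y))
      obtain ⟨b'', hb''L, hb''z⟩ := hInv z hlegsz
      have hwit : ∃ pr ∈ (wv z).zip (wv y), pr.1 < pr.2 := by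
        obtain ⟨i, hi⟩ := hzy
        have hlt2 : WFRank (hwf i) z < WFRank (hwf i) y := by
          have := Acc.rank_lt_of_rel ((hwf i).apply y) hi
          exact this
        refine ⟨((fun x => WFRank (hwf i) x) z, (fun x => WFRank (hwf i) x) y), ?_, hlt2⟩
        rw [hwv, List.zip_map', List.mem_map]
        refine ⟨(fun x => WFRank (hwf i) x, a i), ?_, rfl⟩
        rw [hρs]
        exact List.mem_map_of_mem (List.mem_finRange i)
      rcases List.mem_append.1 hb''L with h1 | h2
      · exact ⟨b'', List.mem_append_left _ (List.mem_append_left _ h1), hb''z⟩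
      · rcases List.mem_cons.1 h2 with rfl | h3
        · obtain ⟨pb, hpb, hpbz⟩ := cover b'' (wv y) (wv z) hby hb''z hwit
          exact ⟨pb, List.mem_append_left _ (List.mem_append_right _ hpb), hpbz⟩
        · exact ⟨b'', List.mem_append_right _ h3, hb''z⟩
    · rw [famMes_append, famMes_append, famMes_append]
      simp only [famMes, nadd_zero]
      rw [nadd_assoc]
      apply nadd_lt_nadd_left
      apply nadd_lt_nadd_right
      exact star b (wv y) 0 hby
  -- a sequence extension gives a legal element
  have hlegconc : ∀ (s : List I) (y : I), (s ++ [y]) ∈ HSet r → legal s y := by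
    intro s y h
    have h2 := (List.pairwise_append.1 h).2.2
    intro x hx
    exact h2 x hx y (List.mem_singleton_self y)
  -- accessibility
  have hacc : ∀ o : Ordinal.{u}, ∀ L : List OBox, famMes 0 L ≤ o →
      ∀ (s : List I) (hs : s ∈ HSet r), Inv s L → Acc (HExt r) ⟨s, hs⟩ := by
    intro o
    induction o using Ordinal.induction with
    | h o iho =>
    intro L hLo s hs hInv
    constructor
    rintro ⟨t, ht⟩ ⟨y, hy⟩
    simp only at hy
    have hty : t = s ++ [y] := hy
    subst hty
    have hleg : legal s y := hlegconc s y ht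
    obtain ⟨L', hInv', hlt'⟩ := hstep s y L hInv hleg
    exact iho (famMes 0 L') (lt_of_lt_of_le hlt' hLo) L' le_rfl (s ++ [y]) ht hInv'
  have hwf0 : WellFounded (HExt r) := by
    constructor
    rintro ⟨s, hs⟩
    exact hacc (famMes 0 [box0]) [box0] le_rfl s hs (hInv0 s)
  -- rank bound
  have hrank : ∀ o : Ordinal.{u}, ∀ L : List OBox, famMes 0 L ≤ o →
      ∀ (s : List I) (hs : s ∈ HSet r), Inv s L →
      (hwf0.apply ⟨s, hs⟩).rank ≤ famMes 0 L := by
    intro o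
    induction o using Ordinal.induction with
    | h o iho =>
    intro L hLo s hs hInv
    rw [Acc.rank_eq]
    apply Ordinal.iSup_le
    rintro ⟨⟨t, ht⟩, ⟨y, hy⟩⟩
    simp only at hy
    have hty : t = s ++ [y] := hy
    subst hty
    have hleg : legal s y := hlegconc s y ht
    obtain ⟨L', hInv', hlt'⟩ := hstep s y L hInv hleg
    have hrk := iho (famMes 0 L') (lt_of_lt_of_le hlt' hLo) L' le_rfl (s ++ [y]) ht hInv'
    exact succ_le_of_lt (lt_of_le_of_lt hrk hlt')
  refine ⟨hwf0, ?_⟩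
  have h0 : ([] : List I) ∈ HSet r := List.Pairwise.nil
  have hmain := hrank (famMes 0 [box0]) [box0] le_rfl [] h0 (hInv0 [])
  have hfin : famMes 0 [box0] =
      (2 : Ordinal) ^ NatOrdinal.toOrdinal (∑ i, Ordinal.toNatOrdinal (a i)) := by
    simp only [famMes, nadd_zero, zero_nadd]
    congr 1
    have hbeq : box0 = (List.finRange k).map (fun i => ((0 : Ordinal.{u}), a i)) := by
      rw [hbox0, hρs, List.map_map]
      rfl
    rw [hbeq, lenSum_zero_map, Fin.sum_univ_def, toOrdinal_list_sum, List.map_map]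
    congr 1
  rw [hfin] at hmain
  exact hmain
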